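/- For every j ∈ {1,…,μ}, the local code C_j of Construction 1 is an F_{q^m}-linear code of length r+δ−1 and dimension r over F_{q^m} whose minimum rank distance equals δ; that is, each local code is a maximum rank distance (MRD) code of length r+δ−1 and dimension r. -/

import Mathlib

/-- The `j`-th local code `C_j` of Construction 1: evaluations of the encoding polynomials
`G_m(x) = Σ_{i<r} Σ_{j'<κ} m_{ij'} x^{q^{s j' + i}}` at the points of
`P_j = {α_a β_j : a < s}`. -/
noncomputable def localCode (Ks Kn Km : Type*) [Field Ks] [Field Kn] [Field Km]
    [Algebra Ks Km] [Algebra Kn Km] (q s r κ : ℕ) {μ : ℕ}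
    (α : Fin s → Ks) (β : Fin μ → Kn) (j : Fin μ) : Set (Fin s → Km) :=
  {c | ∃ M : Fin r → Fin κ → Km, c = fun a =>
    ∑ i : Fin r, ∑ j' : Fin κ,
      M i j' * (algebraMap Ks Km (α a) * algebraMap Kn Km (β j))
          ^ (q ^ (s * (j' : ℕ) + (i : ℕ)))}

/-- The rank over `Fq` of a vector with entries in `Km`. -/
noncomputable def rankVec (Fq : Type*) [Field Fq] {Km : Type*} [Field Km] [Algebra Fq Km]
    {ι : Type*} (c : ι → Km) : ℕ :=
  Module.finrank Fq (Submodule.span Fq (Set.range c))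

open Module Submodule Polynomial

namespace MRDaux

set_option linter.unusedSectionVars false

variable {Fq Km : Type*} [Field Fq] [Field Km] [Fintype Fq] [Fintype Km] [Algebra Fq Km]
variable {q : ℕ}

lemma qpow_add (p a : ℕ) [Fact p.Prime] [CharP Km p] (hq : q = p ^ a)
    (i : ℕ) (x y : Km) : (x + y) ^ q ^ i = x ^ q ^ i + y ^ q ^ i := by
  subst hq; rw [← pow_mul]; exact add_pow_char_pow ..

lemma qpow_sum (p a : ℕ) [Fact p.Prime] [CharP Km p] (hq : q = p ^ a)
    {ι : Type*} (s : Finset ι) (f : ι → Km) (i : ℕ) :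
    (∑ x ∈ s, f x) ^ q ^ i = ∑ x ∈ s, f x ^ q ^ i := by
  subst hq; rw [← pow_mul]; exact sum_pow_char_pow ..

lemma alg_fixed (hcFq : Fintype.card Fq = q) (lam : Fq) (i : ℕ) :
    (algebraMap Fq Km lam) ^ q ^ i = algebraMap Fq Km lam := by
  rw [← map_pow]
  congr 1
  induction i with
  | zero => simp
  | succ i ih => rw [pow_succ, pow_mul, ih, ← hcFq, FiniteField.pow_card]

/-- The `q`-linearized polynomial map `x ↦ ∑ i, N i * x ^ (q ^ i)` as an `Fq`-linear map. -/
noncomputable def qpolyLM (p a : ℕ) [Fact p.Prime] [CharP Km p] (hq : q = p ^ a)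
    (hcFq : Fintype.card Fq = q) {r : ℕ} (N : Fin r → Km) : Km →ₗ[Fq] Km where
  toFun x := ∑ i : Fin r, N i * x ^ q ^ (i : ℕ)
  map_add' x y := by
    simp only [qpow_add p a hq, mul_add]
    exact Finset.sum_add_distrib
  map_smul' lam x := by
    simp only [Algebra.smul_def, RingHom.id_apply, mul_pow, alg_fixed hcFq, Finset.mul_sum]
    exact Finset.sum_congr rfl fun i _ => by ring

lemma qpolyLM_apply (p a : ℕ) [Fact p.Prime] [CharP Km p] (hq : q = p ^ a)
    (hcFq : Fintype.card Fq = q) {r : ℕ} (N : Fin r → Km) (x : Km) :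
    qpolyLM p a hq hcFq N x = ∑ i : Fin r, N i * x ^ q ^ (i : ℕ) := rfl

lemma ker_bound (p a : ℕ) [Fact p.Prime] [CharP Km p] (hq : q = p ^ a) (ha : 0 < a)
    (hcFq : Fintype.card Fq = q) {r : ℕ} (hr : 0 < r) (N : Fin r → Km) (hN : N ≠ 0) :
    finrank Fq (LinearMap.ker (qpolyLM p a hq hcFq N)) ≤ r - 1 := by
  classical
  have q2 : 2 ≤ q := by
    subst hq
    calc 2 ≤ p := (Fact.out : p.Prime).two_le
    _ ≤ p ^ a := Nat.le_self_pow ha.ne' p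
  set L := qpolyLM p a hq hcFq N
  set P : Polynomial Km := ∑ i : Fin r, Polynomial.C (N i) * Polynomial.X ^ (q ^ (i : ℕ)) with hP
  obtain ⟨i0, hi0⟩ : ∃ i0, N i0 ≠ 0 := Function.ne_iff.mp hN
  have hcoeff : P.coeff (q ^ (i0 : ℕ)) = N i0 := by
    rw [hP, Polynomial.finset_sum_coeff]
    rw [Finset.sum_eq_single i0]
    · simp
    · intro b _ hb
      have : ¬ (q ^ (i0 : ℕ) = q ^ (b : ℕ)) := fun h =>
        hb (Fin.ext (Nat.pow_right_injective q2 h.symm))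
      simp [Polynomial.coeff_X_pow, this]
    · simp
  have hPne : P ≠ 0 := fun h => hi0 (by rw [← hcoeff, h, Polynomial.coeff_zero])
  have hdeg : P.natDegree ≤ q ^ (r - 1) := by
    refine Polynomial.natDegree_sum_le_of_forall_le _ _ fun i _ => ?_
    refine le_trans (Polynomial.natDegree_mul_le) ?_
    simp only [Polynomial.natDegree_C, Polynomial.natDegree_X_pow, zero_add]
    exact Nat.pow_le_pow_right (by omega) (by omega)
  have hroot : ∀ x : Km, x ∈ LinearMap.ker L → x ∈ P.roots.toFinset := by
    intro x hx
    rw [Multiset.mem_toFinset, Polynomial.mem_roots']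
    refine ⟨hPne, ?_⟩
    have : L x = 0 := hx
    rw [qpolyLM_apply] at this
    simp only [Polynomial.IsRoot, hP, Polynomial.eval_finset_sum, Polynomial.eval_mul,
      Polynomial.eval_C, Polynomial.eval_pow, Polynomial.eval_X]
    exact this
  haveI : Fintype (LinearMap.ker L) := Fintype.ofFinite _
  have hcard : Fintype.card (LinearMap.ker L) ≤ q ^ (r - 1) := by
    have h1 : Fintype.card (LinearMap.ker L) ≤ P.roots.toFinset.card := by
      rw [← Fintype.card_coe]
      exact Fintype.card_le_of_injective
        (fun x : LinearMap.ker L => (⟨x.1, hroot x.1 x.2⟩ : ↥P.roots.toFinset))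
        (fun x y h => Subtype.ext (by simpa using congrArg Subtype.val h))
    calc Fintype.card (LinearMap.ker L) ≤ P.roots.toFinset.card := h1
    _ ≤ Multiset.card P.roots := P.roots.toFinset_card_le
    _ ≤ P.natDegree := Polynomial.card_roots' P
    _ ≤ q ^ (r - 1) := hdeg
  have hcard2 : Fintype.card (LinearMap.ker L) = q ^ finrank Fq (LinearMap.ker L) := by
    rw [← hcFq]; exact card_eq_pow_finrank
  rw [hcard2] at hcard
  exact (Nat.pow_le_pow_iff_right q2).mp hcard


lemma rank_ge (p a : ℕ) [Fact p.Prime] [CharP Km p] (hq : q = p ^ a) (ha : 0 < a)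
    (hcFq : Fintype.card Fq = q) {r s δ : ℕ} (hr : 0 < r) (hδ : 0 < δ) (hs : s = r + δ - 1)
    {A : Fin s → Km} (hA : LinearIndependent Fq A) (N : Fin r → Km) (hN : N ≠ 0) :
    δ ≤ finrank Fq (span Fq (Set.range fun a' => ∑ i : Fin r, N i * (A a') ^ q ^ (i : ℕ))) := by
  set L := qpolyLM p a hq hcFq N with hL
  set U := span Fq (Set.range A) with hUdef
  have hU : finrank Fq U = s := by rw [finrank_span_eq_card hA, Fintype.card_fin]
  set L' := L ∘ₗ U.subtype with hL'
  have hrange : LinearMap.range L' = U.map L := by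
    rw [hL', LinearMap.range_comp, Submodule.range_subtype]
  have hfun : (fun a' => ∑ i : Fin r, N i * (A a') ^ q ^ (i : ℕ)) = ⇑L ∘ A := by
    funext a'; simp [hL, qpolyLM_apply, Function.comp]
  have hspan : span Fq (Set.range fun a' => ∑ i : Fin r, N i * (A a') ^ q ^ (i : ℕ))
      = U.map L := by
    rw [hfun, hUdef, Submodule.map_span, ← Set.range_comp]
  have hRN : finrank Fq (LinearMap.range L') + finrank Fq (LinearMap.ker L')
      = finrank Fq U := LinearMap.finrank_range_add_finrank_ker L'
  have hker : finrank Fq (LinearMap.ker L') ≤ r - 1 := by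
    have h1 : (LinearMap.ker L').map U.subtype ≤ LinearMap.ker L := by
      rintro x ⟨y, hy, rfl⟩
      simpa [hL', LinearMap.mem_ker] using hy
    calc finrank Fq (LinearMap.ker L')
        = finrank Fq ((LinearMap.ker L').map U.subtype) :=
          (Submodule.finrank_map_subtype_eq U _).symm
      _ ≤ finrank Fq (LinearMap.ker L) := Submodule.finrank_mono h1
      _ ≤ r - 1 := ker_bound p a hq ha hcFq hr N hN
  rw [hspan, ← hrange]
  omega

lemma rank_le (p a : ℕ) [Fact p.Prime] [CharP Km p] (hq : q = p ^ a) (ha : 0 < a)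
    (hcFq : Fintype.card Fq = q) {r s δ : ℕ} (hr : 0 < r) (hδ : 0 < δ) (hs : s = r + δ - 1)
    {A : Fin s → Km} (hA : LinearIndependent Fq A) (N : Fin r → Km)
    (hvan : ∀ a' : Fin s, (a' : ℕ) < r - 1 →
      ∑ i : Fin r, N i * (A a') ^ q ^ (i : ℕ) = 0) :
    finrank Fq (span Fq (Set.range fun a' => ∑ i : Fin r, N i * (A a') ^ q ^ (i : ℕ))) ≤ δ := by
  set L := qpolyLM p a hq hcFq N with hL
  set U := span Fq (Set.range A) with hUdef
  have hU : finrank Fq U = s := by rw [finrank_span_eq_card hA, Fintype.card_fin]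
  set L' := L ∘ₗ U.subtype with hL'
  have hrange : LinearMap.range L' = U.map L := by
    rw [hL', LinearMap.range_comp, Submodule.range_subtype]
  have hfun : (fun a' => ∑ i : Fin r, N i * (A a') ^ q ^ (i : ℕ)) = ⇑L ∘ A := by
    funext a'; simp [hL, qpolyLM_apply, Function.comp]
  have hspan : span Fq (Set.range fun a' => ∑ i : Fin r, N i * (A a') ^ q ^ (i : ℕ))
      = U.map L := by
    rw [hfun, hUdef, Submodule.map_span, ← Set.range_comp]
  have hRN : finrank Fq (LinearMap.range L') + finrank Fq (LinearMap.ker L')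
      = finrank Fq U := LinearMap.finrank_range_add_finrank_ker L'
  have hrs : r - 1 ≤ s := by omega
  have hmemU : ∀ b : Fin (r-1), A (Fin.castLE hrs b) ∈ U :=
    fun b => subset_span (Set.mem_range_self _)
  have hmemker : ∀ b : Fin (r-1),
      (⟨A (Fin.castLE hrs b), hmemU b⟩ : U) ∈ LinearMap.ker L' := by
    intro b
    rw [LinearMap.mem_ker]
    show L (A (Fin.castLE hrs b)) = 0
    rw [hL, qpolyLM_apply]
    exact hvan _ b.2
  set f : Fin (r-1) → LinearMap.ker L' :=
    fun b => ⟨⟨A (Fin.castLE hrs b), hmemU b⟩, hmemker b⟩ with hf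
  have hcomp : (⇑(U.subtype ∘ₗ (LinearMap.ker L').subtype)) ∘ f
      = A ∘ Fin.castLE hrs := rfl
  have hfi : LinearIndependent Fq f := by
    refine LinearIndependent.of_comp (U.subtype ∘ₗ (LinearMap.ker L').subtype) ?_
    rw [hcomp]
    exact hA.comp _ (Fin.castLE_injective hrs)
  have hkerge : r - 1 ≤ finrank Fq (LinearMap.ker L') := by
    simpa using hfi.fintype_card_le_finrank
  rw [hspan, ← hrange]
  omega

lemma exists_coeffs (p a : ℕ) [Fact p.Prime] [CharP Km p] (hq : q = p ^ a) (ha : 0 < a)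
    (B : ℕ → Km) (t : ℕ) :
    ∃ N : Fin (t+1) → Km, N (Fin.last t) = 1 ∧
      ∀ u : ℕ, u < t → ∑ i : Fin (t+1), N i * (B u) ^ q ^ (i : ℕ) = 0 := by
  have hq1 : 1 ≤ q := by
    subst hq; exact Nat.one_le_pow _ _ (Fact.out : p.Prime).pos
  induction t with
  | zero => exact ⟨fun _ => 1, rfl, by omega⟩
  | succ t ih =>
    obtain ⟨N, hlast, hvan⟩ := ih
    set d : Km := ∑ i : Fin (t+1), N i * (B t) ^ q ^ (i : ℕ) with hd
    refine ⟨fun i => (Fin.cons (0:Km) (fun i' => (N i')^q) : Fin (t+2) → Km) i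
      - d^(q-1) * (Fin.snoc N (0:Km) : Fin (t+2) → Km) i, ?_, ?_⟩
    · have e1 : (Fin.cons (0:Km) (fun i' => (N i')^q) : Fin (t+2) → Km) (Fin.last (t+1)) = 1 := by
        rw [← Fin.succ_last, Fin.cons_succ, hlast, one_pow]
      have e2 : (Fin.snoc N (0:Km) : Fin (t+2) → Km) (Fin.last (t+1)) = 0 :=
        Fin.snoc_last _ _
      simp only [e1, e2, mul_zero, sub_zero]
    · have key : ∀ x : Km, (∑ i : Fin (t+2),
          ((Fin.cons (0:Km) (fun i' => (N i')^q) : Fin (t+2) → Km) i - d^(q-1) * (Fin.snoc N (0:Km) : Fin (t+2) → Km) i)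
            * x ^ q ^ (i : ℕ))
          = (∑ i : Fin (t+1), N i * x ^ q ^ (i : ℕ))^q
            - d^(q-1) * ∑ i : Fin (t+1), N i * x ^ q ^ (i : ℕ) := by
        intro x
        have h1 : (∑ i : Fin (t+2),
            (Fin.cons (0:Km) (fun i' => (N i')^q) : Fin (t+2) → Km) i * x ^ q ^ (i : ℕ))
            = (∑ i : Fin (t+1), N i * x ^ q ^ (i : ℕ))^q := by
          rw [Fin.sum_univ_succ, Fin.cons_zero, zero_mul, zero_add]
          have hs1 := qpow_sum p a hq (Finset.univ)
            (fun i : Fin (t+1) => N i * x ^ q ^ (i : ℕ)) 1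
          rw [pow_one] at hs1
          rw [hs1]
          refine Finset.sum_congr rfl fun i _ => ?_
          rw [Fin.cons_succ, Fin.val_succ, pow_succ, pow_mul, mul_pow]
        have h2 : (∑ i : Fin (t+2),
            (Fin.snoc N (0:Km) : Fin (t+2) → Km) i * x ^ q ^ (i : ℕ))
            = ∑ i : Fin (t+1), N i * x ^ q ^ (i : ℕ) := by
          rw [Fin.sum_univ_castSucc]
          simp [Fin.snoc_castSucc, Fin.snoc_last]
        calc (∑ i : Fin (t+2),
            ((Fin.cons (0:Km) (fun i' => (N i')^q) : Fin (t+2) → Km) i - d^(q-1) * (Fin.snoc N (0:Km) : Fin (t+2) → Km) i)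
              * x ^ q ^ (i : ℕ))
            = (∑ i : Fin (t+2),
                (Fin.cons (0:Km) (fun i' => (N i')^q) : Fin (t+2) → Km) i * x ^ q ^ (i : ℕ))
              - d^(q-1) * ∑ i : Fin (t+2),
                (Fin.snoc N (0:Km) : Fin (t+2) → Km) i * x ^ q ^ (i : ℕ) := by
              rw [Finset.mul_sum, ← Finset.sum_sub_distrib]
              exact Finset.sum_congr rfl fun i _ => by ring
          _ = _ := by rw [h1, h2]
      intro u hu
      rcases Nat.lt_or_ge u t with h | h
      · rw [key (B u), hvan u h, zero_pow (by omega : q ≠ 0), mul_zero, sub_zero]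
      · have hut : u = t := by omega
        subst hut
        rw [key (B u), ← hd]
        have : d ^ (q-1) * d = d ^ q := by
          rw [← pow_succ, Nat.sub_add_cancel hq1]
        rw [this, sub_self]

lemma exists_coeffs' (p a : ℕ) [Fact p.Prime] [CharP Km p] (hq : q = p ^ a) (ha : 0 < a)
    (B : ℕ → Km) (r : ℕ) (hr : 0 < r) :
    ∃ N : Fin r → Km, N ⟨r-1, by omega⟩ = 1 ∧
      ∀ u : ℕ, u < r - 1 → ∑ i : Fin r, N i * (B u) ^ q ^ (i : ℕ) = 0 := by
  obtain ⟨r', rfl⟩ : ∃ r', r = r' + 1 := ⟨r-1, by omega⟩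
  obtain ⟨N, h1, h2⟩ := exists_coeffs p a hq ha B r'
  refine ⟨N, ?_, fun u hu => h2 u (by omega)⟩
  have he : (⟨r'+1-1, by omega⟩ : Fin (r'+1)) = Fin.last r' := Fin.ext (by simp)
  rw [he, h1]

end MRDaux

/-- **The local codes of Construction 1 are MRD.**  For every `j ∈ {1,…,μ}`, the local code
`C_j` is an `F_{q^m}`-linear code of length `r + δ - 1` and dimension `r` over `F_{q^m}`
whose minimum rank distance equals `δ`; i.e., each local code is a maximum rank distance
code of length `r + δ - 1` and dimension `r`. -/
theorem localCode_is_MRD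
    (q m n k r δ s μ κ : ℕ) (hq : IsPrimePow q)
    (hr : 0 < r) (hδ : 0 < δ) (hk : 0 < k) (hn : 0 < n) (hm : 0 < m)
    (hs : s = r + δ - 1) (hrk : k = r * κ) (hsn : n = s * μ) (hnm : n ∣ m)
    (Fq Ks Kn Km : Type*) [Field Fq] [Field Ks] [Field Kn] [Field Km]
    [Fintype Fq] [Fintype Ks] [Fintype Kn] [Fintype Km]
    [Algebra Fq Ks] [Algebra Fq Kn] [Algebra Fq Km]
    [Algebra Ks Kn] [Algebra Ks Km] [Algebra Kn Km]
    [IsScalarTower Fq Ks Kn] [IsScalarTower Fq Ks Km] [IsScalarTower Fq Kn Km]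
    [IsScalarTower Ks Kn Km]
    (hcFq : Fintype.card Fq = q) (hcKs : Fintype.card Ks = q ^ s)
    (hcKn : Fintype.card Kn = q ^ n) (hcKm : Fintype.card Km = q ^ m)
    (α : Basis (Fin s) Fq Ks) (β : Basis (Fin μ) Ks Kn)
    (j : Fin μ) :
    -- `C_j` is an `F_{q^m}`-linear code of length `s = r + δ - 1` and dimension `r`
    (∃ W : Submodule Km (Fin s → Km),
        (W : Set (Fin s → Km)) = localCode Ks Kn Km q s r κ α β j ∧
        Module.finrank Km W = r) ∧
    -- its minimum rank distance equals `δ`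
    (∀ c ∈ localCode Ks Kn Km q s r κ α β j, ∀ c' ∈ localCode Ks Kn Km q s r κ α β j,
        c ≠ c' → δ ≤ rankVec Fq (fun a => c a - c' a)) ∧
    (∃ c ∈ localCode Ks Kn Km q s r κ α β j, ∃ c' ∈ localCode Ks Kn Km q s r κ α β j,
        c ≠ c' ∧ rankVec Fq (fun a => c a - c' a) = δ) := by
  classical
  have hκ : 0 < κ := by
    rcases Nat.eq_zero_or_pos κ with h | h
    · subst h; omega
    · exact h
  haveI : NeZero κ := ⟨hκ.ne'⟩
  -- characteristic set-up
  obtain ⟨p, e, hpp, hepos, hqpe'⟩ := hq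
  have hp : p.Prime := Nat.prime_iff.mpr hpp
  haveI : Fact p.Prime := ⟨hp⟩
  have hqpe : q = p ^ e := hqpe'.symm
  haveI : CharP Km (ringChar Km) := ringChar.charP Km
  obtain ⟨l, hrcprime, hcardKm⟩ := FiniteField.card Km (ringChar Km)
  have hrc : ringChar Km = p := by
    have h2 : (ringChar Km) ^ (l : ℕ) = p ^ (e * m) := by
      rw [← hcardKm, hcKm, hqpe, ← pow_mul]
    have h1 : ringChar Km ∣ p ^ (e * m) := h2 ▸ dvd_pow_self (ringChar Km) l.2.ne'
    exact (Nat.prime_dvd_prime_iff_eq hrcprime hp).mp (hrcprime.dvd_of_dvd_pow h1)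
  haveI hcharKm : CharP Km p := hrc ▸ ringChar.charP Km
  -- evaluation points and their independence
  have hAind : LinearIndependent Fq (fun a' : Fin s => algebraMap Ks Km (α a')) := by
    have := (α.linearIndependent).map' ((IsScalarTower.toAlgHom Fq Ks Km).toLinearMap)
      (LinearMap.ker_eq_bot.mpr (algebraMap Ks Km).injective)
    exact this
  have hbj0 : algebraMap Kn Km (β j) ≠ 0 :=
    (map_ne_zero (algebraMap Kn Km)).mpr (β.ne_zero j)
  -- the Frobenius fixed-point identity
  have hfixpow : ∀ (z : Ks) (j' : ℕ),
      (algebraMap Ks Km z) ^ (q ^ s) ^ j' = algebraMap Ks Km z := by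
    intro z j'
    induction j' with
    | zero => simp
    | succ j' ih => rw [pow_succ, pow_mul, ih, ← map_pow, ← hcKs, FiniteField.pow_card]
  have hkey : ∀ (a' : Fin s) (i j' : ℕ),
      (algebraMap Ks Km (α a') * algebraMap Kn Km (β j)) ^ q ^ (s * j' + i)
      = (algebraMap Ks Km (α a')) ^ q ^ i
        * (algebraMap Kn Km (β j)) ^ q ^ (s * j' + i) := by
    intro a' i j'
    rw [mul_pow]
    congr 1
    have h1 : (algebraMap Ks Km (α a')) ^ q ^ (s * j' + i)
        = ((algebraMap Ks Km (α a')) ^ ((q ^ s) ^ j')) ^ q ^ i := by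
      rw [pow_add, ← pow_mul q s j', pow_mul]
    rw [h1, hfixpow (α a') j']
  -- reformulation of the local code
  have hcode : localCode Ks Kn Km q s r κ α β j
      = {c | ∃ N : Fin r → Km, c = fun a' =>
          ∑ i : Fin r, N i * (algebraMap Ks Km (α a')) ^ q ^ (i : ℕ)} := by
    ext c
    constructor
    · rintro ⟨M, rfl⟩
      refine ⟨fun i => ∑ j' : Fin κ,
        M i j' * (algebraMap Kn Km (β j)) ^ q ^ (s * (j' : ℕ) + (i : ℕ)), ?_⟩
      funext a'
      refine Finset.sum_congr rfl fun i _ => ?_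
      rw [Finset.sum_mul]
      refine Finset.sum_congr rfl fun j' _ => ?_
      rw [hkey a' i j']
      ring
    · rintro ⟨N, rfl⟩
      refine ⟨fun i j' => if j' = (0 : Fin κ) then
        N i / (algebraMap Kn Km (β j)) ^ q ^ (i : ℕ) else 0, ?_⟩
      funext a'
      beta_reduce
      refine Finset.sum_congr rfl fun i _ => ?_
      rw [Finset.sum_eq_single (0 : Fin κ)]
      · beta_reduce
        rw [if_pos rfl]
        have hz : ((0 : Fin κ) : ℕ) = 0 := rfl
        rw [hz, hkey a' (i : ℕ) 0, Nat.mul_zero, Nat.zero_add]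
        have hb : (algebraMap Kn Km (β j)) ^ q ^ (i : ℕ) ≠ 0 := pow_ne_zero _ hbj0
        field_simp
      · intro b _ hb
        beta_reduce
        rw [if_neg hb, zero_mul]
      · intro h
        exact absurd (Finset.mem_univ _) h
  -- the code as the range of a Km-linear map
  set G : (Fin r → Km) →ₗ[Km] (Fin s → Km) :=
    { toFun := fun N a' => ∑ i : Fin r, N i * (algebraMap Ks Km (α a')) ^ q ^ (i : ℕ)
      map_add' := by
        intro N N'
        funext a'
        simp [add_mul, Finset.sum_add_distrib]
      map_smul' := by
        intro cc N
        funext a'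
        simp [Finset.mul_sum, mul_assoc] } with hG
  -- rank of the span of the zero function
  have hzero : ∀ f : Fin s → Km, f = (fun _ => (0 : Km)) →
      Module.finrank Fq (Submodule.span Fq (Set.range f)) = 0 := by
    intro f hf
    have h4 : Submodule.span Fq (Set.range f) ≤ ⊥ := by
      rw [Submodule.span_le]
      rintro x ⟨a', rfl⟩
      simp [hf]
    rw [le_bot_iff.mp h4, finrank_bot]
  -- injectivity of G
  have hGinj : Function.Injective G := by
    rw [← LinearMap.ker_eq_bot, LinearMap.ker_eq_bot']
    intro N hGN
    by_contra hN0
    have h1 := MRDaux.rank_ge p e hqpe hepos hcFq hr hδ hs hAind N hN0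
    have h2 : (fun a' => ∑ i : Fin r, N i * (algebraMap Ks Km (α a')) ^ q ^ (i : ℕ))
        = fun _ : Fin s => (0 : Km) := by
      funext a'
      exact congrFun hGN a'
    rw [h2, hzero _ rfl] at h1
    omega
  refine ⟨⟨LinearMap.range G, ?_, ?_⟩, ?_, ?_⟩
  · -- set equality
    rw [hcode]
    ext c
    simp only [SetLike.mem_coe, LinearMap.mem_range, Set.mem_setOf_eq]
    constructor
    · rintro ⟨N, rfl⟩; exact ⟨N, rfl⟩
    · rintro ⟨N, rfl⟩; exact ⟨N, rfl⟩
  · rw [LinearMap.finrank_range_of_inj hGinj, Module.finrank_fin_fun]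
  · -- minimum distance lower bound
    intro c hc c' hc' hne
    rw [hcode] at hc hc'
    obtain ⟨N, rfl⟩ := hc
    obtain ⟨N', rfl⟩ := hc'
    have hNN' : (fun i => N i - N' i) ≠ (0 : Fin r → Km) := by
      intro h
      apply hne
      funext a'
      have : ∀ i, N i = N' i := fun i => sub_eq_zero.mp (congrFun h i)
      simp [this]
    show δ ≤ Module.finrank Fq (Submodule.span Fq (Set.range fun a' =>
      (∑ i : Fin r, N i * (algebraMap Ks Km (α a')) ^ q ^ (i : ℕ))
      - ∑ i : Fin r, N' i * (algebraMap Ks Km (α a')) ^ q ^ (i : ℕ)))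
    have hfun : (fun a' =>
        (∑ i : Fin r, N i * (algebraMap Ks Km (α a')) ^ q ^ (i : ℕ))
        - ∑ i : Fin r, N' i * (algebraMap Ks Km (α a')) ^ q ^ (i : ℕ))
        = fun a' => ∑ i : Fin r,
          (fun i => N i - N' i) i * (algebraMap Ks Km (α a')) ^ q ^ (i : ℕ) := by
      funext a'
      rw [← Finset.sum_sub_distrib]
      exact Finset.sum_congr rfl fun i _ => (sub_mul _ _ _).symm
    rw [hfun]
    exact MRDaux.rank_ge p e hqpe hepos hcFq hr hδ hs hAind _ hNN'
  · -- existence of a codeword of rank exactly δ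
    obtain ⟨N, hNlast, hNvan⟩ := MRDaux.exists_coeffs' p e hqpe hepos
      (fun u => if h : u < s then algebraMap Ks Km (α ⟨u, h⟩) else 0) r hr
    have hN0 : N ≠ 0 := by
      intro h
      rw [h] at hNlast
      exact one_ne_zero hNlast.symm
    have hvan' : ∀ a' : Fin s, (a' : ℕ) < r - 1 →
        ∑ i : Fin r, N i * (algebraMap Ks Km (α a')) ^ q ^ (i : ℕ) = 0 := by
      intro a' ha'
      have h := hNvan (a' : ℕ) ha'
      rw [dif_pos a'.2] at h
      simpa using h
    have hrge := MRDaux.rank_ge p e hqpe hepos hcFq hr hδ hs hAind N hN0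
    have hrle := MRDaux.rank_le p e hqpe hepos hcFq hr hδ hs hAind N hvan'
    refine ⟨fun a' => ∑ i : Fin r, N i * (algebraMap Ks Km (α a')) ^ q ^ (i : ℕ),
      by rw [hcode]; exact ⟨N, rfl⟩,
      (fun _ => 0),
      by rw [hcode]; exact ⟨0, by funext a'; simp⟩, ?_, ?_⟩
    · intro h
      rw [h, hzero _ rfl] at hrge
      omega
    · show Module.finrank Fq (Submodule.span Fq (Set.range fun a' =>
        (∑ i : Fin r, N i * (algebraMap Ks Km (α a')) ^ q ^ (i : ℕ)) - 0)) = δ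
      have hf2 : (fun a' =>
          (∑ i : Fin r, N i * (algebraMap Ks Km (α a')) ^ q ^ (i : ℕ)) - 0)
          = fun a' => ∑ i : Fin r, N i * (algebraMap Ks Km (α a')) ^ q ^ (i : ℕ) := by
        funext a'; rw [sub_zero]
      rw [hf2]
      exact le_antisymm hrle hrge
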